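/- Let n ≥ 2 and define f : ℂ^n → ℂ by f(z) = z₂ · conj(z₁). Then: (a) for every complex affine line L through the origin with L ∩ 𝔹^n ≠ ∅, the restriction of f to L ∩ ∂𝔹^n extends holomorphically along L (indeed, for every v with |v| = 1, the function ζ ↦ f(ζ v) is constant on the unit circle |ζ| = 1); but (b) there is no function F continuous on the closed unit ball, holomorphic on 𝔹^n, with F = f on ∂𝔹^n. Hence the complex lines through a single interior point of the ball do not form a testing family for holomorphic extendibility. -/

import Mathlib

open Complex Metric Set

/-- The function `f(z) = z₂ · conj(z₁)` on `ℂⁿ` (`n ≥ 2`). -/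
noncomputable def counterexampleFun (n : ℕ) (hn : 2 ≤ n)
    (z : EuclideanSpace ℂ (Fin n)) : ℂ :=
  z ⟨1, by omega⟩ * (starRingEnd ℂ) (z ⟨0, by omega⟩)

private lemma key {n : ℕ} (hn : 2 ≤ n) (F : EuclideanSpace ℂ (Fin n) → ℂ)
    (hFc : ContinuousOn F (closedBall 0 1))
    (hFd : DifferentiableOn ℂ F (ball 0 1))
    (hFb : ∀ z ∈ sphere (0 : EuclideanSpace ℂ (Fin n)) 1, F z = counterexampleFun n hn z)
    (v : EuclideanSpace ℂ (Fin n)) (hv : ‖v‖ = 1) :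
    F 0 = v ⟨1, by omega⟩ * (starRingEnd ℂ) (v ⟨0, by omega⟩) := by
  set c : ℂ := v ⟨1, by omega⟩ * (starRingEnd ℂ) (v ⟨0, by omega⟩) with hc
  have hmaps : ∀ ζ : ℂ, ‖ζ • v‖ = ‖ζ‖ := by
    intro ζ; rw [norm_smul, hv, mul_one]
  have hsm : Differentiable ℂ (fun ζ : ℂ => ζ • v) := (differentiable_id.smul_const v)
  have hd : DiffContOnCl ℂ (fun ζ : ℂ => F (ζ • v) - c) (ball 0 1) := by
    constructor
    · apply DifferentiableOn.sub_const
      apply hFd.comp hsm.differentiableOn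
      intro ζ hζ
      simp only [mem_ball, dist_zero_right] at hζ ⊢
      rw [hmaps]; exact hζ
    · rw [closure_ball (0:ℂ) one_ne_zero]
      refine (hFc.comp hsm.continuous.continuousOn ?_).sub continuousOn_const
      intro ζ hζ
      simp only [mem_closedBall, dist_zero_right] at hζ ⊢
      rw [hmaps]; exact hζ
  have hbd : ∀ ζ ∈ frontier (ball (0:ℂ) 1), ‖F (ζ • v) - c‖ ≤ 0 := by
    intro ζ hζ
    rw [frontier_ball (0:ℂ) one_ne_zero, mem_sphere_zero_iff_norm] at hζ
    have hsph : ζ • v ∈ sphere (0 : EuclideanSpace ℂ (Fin n)) 1 := by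
      rw [mem_sphere_zero_iff_norm, hmaps, hζ]
    rw [hFb _ hsph, counterexampleFun]
    have h0 : (ζ • v) ⟨0, by omega⟩ = ζ * v ⟨0, by omega⟩ := rfl
    have h1 : (ζ • v) ⟨1, by omega⟩ = ζ * v ⟨1, by omega⟩ := rfl
    rw [h0, h1, map_mul]
    have hone : ζ * (starRingEnd ℂ) ζ = 1 := by
      rw [Complex.mul_conj]
      norm_cast
      rw [Complex.normSq_eq_norm_sq, hζ, one_pow]
    have heq : ζ * v ⟨1, by omega⟩ * ((starRingEnd ℂ) ζ * (starRingEnd ℂ) (v ⟨0, by omega⟩))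
        = (ζ * (starRingEnd ℂ) ζ) * c := by rw [hc]; ring
    rw [heq, hone, one_mul, sub_self, norm_zero]
  have := Complex.norm_le_of_forall_mem_frontier_norm_le isBounded_ball hd hbd
    (z := 0) (by rw [closure_ball (0:ℂ) one_ne_zero]; simp)
  simp only [zero_smul] at this
  exact sub_eq_zero.mp (norm_le_zero_iff.mp this)


/-- **The lines through one interior point do not test holomorphic extendibility.**
The function `f(z) = z₂ conj(z₁)` is constant on the intersection of the unit sphere
with every complex line through the origin, hence extends holomorphically along each
such line, yet it admits no holomorphic extension to the ball. -/
theorem lines_through_one_point_not_testing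
    {n : ℕ} (hn : 2 ≤ n) :
    -- (a) f is constant on every circle L ∩ ∂𝔹ⁿ, L a complex line through 0 ...
    (∀ v : EuclideanSpace ℂ (Fin n), ‖v‖ = 1 →
      ∃ c : ℂ, ∀ ζ ∈ sphere (0 : ℂ) 1, counterexampleFun n hn (ζ • v) = c) ∧
    -- ... and hence extends holomorphically along every such line ...
    (∀ v : EuclideanSpace ℂ (Fin n), ‖v‖ = 1 →
      ∃ g : ℂ → ℂ, ContinuousOn g (closedBall 0 1) ∧ DifferentiableOn ℂ g (ball 0 1) ∧
        ∀ ζ ∈ sphere (0 : ℂ) 1, g ζ = counterexampleFun n hn (ζ • v)) ∧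
    -- (b) ... but f has no holomorphic extension to the ball.
    ¬ ∃ F : EuclideanSpace ℂ (Fin n) → ℂ,
        ContinuousOn F (closedBall (0 : EuclideanSpace ℂ (Fin n)) 1) ∧
        DifferentiableOn ℂ F (ball (0 : EuclideanSpace ℂ (Fin n)) 1) ∧
        ∀ z ∈ sphere (0 : EuclideanSpace ℂ (Fin n)) 1, F z = counterexampleFun n hn z := by
  have hconst : ∀ v : EuclideanSpace ℂ (Fin n), ∀ ζ ∈ sphere (0 : ℂ) 1,
      counterexampleFun n hn (ζ • v) = v ⟨1, by omega⟩ * (starRingEnd ℂ) (v ⟨0, by omega⟩) := by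
    intro v ζ hζ
    rw [mem_sphere_zero_iff_norm] at hζ
    have hone : ζ * (starRingEnd ℂ) ζ = 1 := by
      rw [Complex.mul_conj]
      norm_cast
      rw [Complex.normSq_eq_norm_sq, hζ, one_pow]
    have h0 : (ζ • v) ⟨0, by omega⟩ = ζ * v ⟨0, by omega⟩ := rfl
    have h1 : (ζ • v) ⟨1, by omega⟩ = ζ * v ⟨1, by omega⟩ := rfl
    rw [counterexampleFun, h0, h1, map_mul]
    calc ζ * v ⟨1, by omega⟩ * ((starRingEnd ℂ) ζ * (starRingEnd ℂ) (v ⟨0, by omega⟩))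
        = (ζ * (starRingEnd ℂ) ζ) * (v ⟨1, by omega⟩ * (starRingEnd ℂ) (v ⟨0, by omega⟩)) := by
          ring
      _ = v ⟨1, by omega⟩ * (starRingEnd ℂ) (v ⟨0, by omega⟩) := by rw [hone, one_mul]
  refine ⟨fun v _ => ⟨_, hconst v⟩, fun v _ => ?_, ?_⟩
  · exact ⟨fun _ => v ⟨1, by omega⟩ * (starRingEnd ℂ) (v ⟨0, by omega⟩),
      continuousOn_const, differentiableOn_const _, fun ζ hζ => (hconst v ζ hζ).symm⟩
  · rintro ⟨F, hFc, hFd, hFb⟩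
    set i0 : Fin n := ⟨0, by omega⟩
    set i1 : Fin n := ⟨1, by omega⟩
    have hne : i1 ≠ i0 := by simp [i0, i1, Fin.ext_iff]
    set a : ℂ := ((Real.sqrt 2 / 2 : ℝ) : ℂ) with ha
    have ha2 : a * (starRingEnd ℂ) a = 1/2 := by
      rw [ha, Complex.conj_ofReal]
      norm_cast
      rw [div_mul_div_comm, Real.mul_self_sqrt (by norm_num)]
      norm_num
    have hna : ‖a‖ = Real.sqrt 2 / 2 := by
      rw [ha, Complex.norm_real, Real.norm_of_nonneg (by positivity)]
    have hinner : ∀ b c : ℂ, inner ℂ (EuclideanSpace.single i0 b) (EuclideanSpace.single i1 c)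
        = (0 : ℂ) := by
      intro b c
      rw [EuclideanSpace.inner_single_left, EuclideanSpace.single_apply, if_neg (Ne.symm hne), mul_zero]
    have hnormsq : ∀ c : ℂ, ‖c‖ = Real.sqrt 2 / 2 →
        ∀ w : EuclideanSpace ℂ (Fin n), inner ℂ (EuclideanSpace.single i0 a) w = (0:ℂ) →
        ‖w‖ = Real.sqrt 2 / 2 → ‖EuclideanSpace.single i0 a + w‖ = 1 := by
      intro c hc w hw hnw
      have h := norm_add_sq (𝕜 := ℂ) (EuclideanSpace.single i0 a) w
      rw [EuclideanSpace.norm_single, hna, hnw] at h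
      have hre : RCLike.re (inner ℂ (EuclideanSpace.single i0 a) w : ℂ) = 0 := by
        rw [hw]; simp
      rw [hre] at h
      have h2 : Real.sqrt 2 ^ 2 = 2 := Real.sq_sqrt (by norm_num)
      have hpos : (0:ℝ) ≤ ‖EuclideanSpace.single i0 a + w‖ := norm_nonneg _
      nlinarith
    have hFp : F 0 = a * (starRingEnd ℂ) a := by
      have hv : ‖EuclideanSpace.single i0 a + EuclideanSpace.single i1 a‖ = 1 :=
        hnormsq a hna _ (hinner a a) (by rw [EuclideanSpace.norm_single, hna])
      have := key hn F hFc hFd hFb _ hv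
      rw [this]
      congr 1
      · show (EuclideanSpace.single i0 a + EuclideanSpace.single i1 a) i1 = a
        simp [EuclideanSpace.single_apply, hne, Ne.symm hne]
      · congr 1
        show (EuclideanSpace.single i0 a + EuclideanSpace.single i1 a) i0 = a
        simp [EuclideanSpace.single_apply, hne, Ne.symm hne]
    have hFm : F 0 = -(a * (starRingEnd ℂ) a) := by
      have hv : ‖EuclideanSpace.single i0 a + EuclideanSpace.single i1 (-a)‖ = 1 :=
        hnormsq a hna _ (hinner a (-a)) (by rw [EuclideanSpace.norm_single, norm_neg, hna])
      have := key hn F hFc hFd hFb _ hv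
      rw [this]
      have e1 : (EuclideanSpace.single i0 a + EuclideanSpace.single i1 (-a)) i1 = -a := by
        simp [EuclideanSpace.single_apply, hne, Ne.symm hne]
      have e0 : (EuclideanSpace.single i0 a + EuclideanSpace.single i1 (-a)) i0 = a := by
        simp [EuclideanSpace.single_apply, hne, Ne.symm hne]
      rw [show ((⟨1, by omega⟩ : Fin n)) = i1 from rfl, show ((⟨0, by omega⟩ : Fin n)) = i0 from rfl,
        e1, e0]
      ring
    rw [hFp, ha2] at hFm
    norm_num at hFm
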